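/- A discrete Q[G]-module M over a t.d.l.c. group G is projective in the category of discrete Q[G]-modules if and only if M is a direct summand of a permutation module Q[Ω] for some discrete left G-set Ω with compact open stabilizers. -/

import Mathlib

open Pointwise

universe u

/-- A discrete `ℚ[G]`-module over a topological group `G`: a `ℚ`-vector space with
a `ℚ`-linear `G`-action in which every element has open stabilizer. -/
structure DiscGMod (G : Type u) [Group G] [TopologicalSpace G] : Type (u + 1) where
  carrier : Type u
  [acg : AddCommGroup carrier]
  [mod : Module ℚ carrier]
  [act : DistribMulAction G carrier]
  [cmm : SMulCommClass G ℚ carrier]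
  discrete : ∀ m : carrier, IsOpen ((MulAction.stabilizer G m : Subgroup G) : Set G)

attribute [instance] DiscGMod.acg DiscGMod.mod DiscGMod.act DiscGMod.cmm

/-- A morphism of discrete `ℚ[G]`-modules is a `G`-equivariant `ℚ`-linear map. -/
def DiscGMod.Equivariant {G : Type u} [Group G] [TopologicalSpace G]
    {A B : DiscGMod G} (f : A.carrier →ₗ[ℚ] B.carrier) : Prop :=
  ∀ (g : G) (a : A.carrier), f (g • a) = g • f a

/-- Projectivity, relative to the category of discrete `ℚ[G]`-modules, of a
`ℚ`-module `P` equipped with a `G`-action `σ`: every equivariant map from `P` to a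
discrete module lifts along every equivariant surjection of discrete modules. -/
def ProjOverDiscrete (G : Type u) [Group G] [TopologicalSpace G]
    (P : Type u) [AddCommGroup P] [Module ℚ P] (σ : G → P → P) : Prop :=
  ∀ (A B : DiscGMod G) (π : B.carrier →ₗ[ℚ] A.carrier),
    DiscGMod.Equivariant π → Function.Surjective π →
    ∀ φ : P →ₗ[ℚ] A.carrier, (∀ (g : G) (x : P), φ (σ g x) = g • φ x) →
    ∃ ψ : P →ₗ[ℚ] B.carrier, (∀ (g : G) (x : P), ψ (σ g x) = g • ψ x) ∧ π.comp ψ = φ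

/-! ### Auxiliary results -/

section VanDantzig

variable {G : Type u} [Group G] [TopologicalSpace G] [IsTopologicalGroup G]

/-- A version of `TopologicalGroup.exist_mul_closure_nhd` where only the clopen set `W`
is assumed compact, not the whole group. -/
lemma aux_exist_mul_closure_nhd {W : Set G} (WClopen : IsClopen W) (Wcomp : IsCompact W) :
    ∃ T ∈ nhds (1 : G), W * T ⊆ W := by
  apply Wcomp.induction_on (p := fun S ↦ ∃ T ∈ nhds (1 : G), S * T ⊆ W)
    ⟨Set.univ, by simp only [Filter.univ_mem, Set.empty_mul, Set.empty_subset, and_self]⟩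
    (fun _ _ huv ⟨T, hT, mem⟩ ↦ ⟨T, hT, (Set.mul_subset_mul_right huv).trans mem⟩)
    (fun U V ⟨T₁, hT₁, mem1⟩ ⟨T₂, hT₂, mem2⟩ ↦ ⟨T₁ ∩ T₂, Filter.inter_mem hT₁ hT₂, by
      rw [Set.union_mul]
      exact Set.union_subset
        ((Set.mul_subset_mul_left Set.inter_subset_left).trans mem1)
        ((Set.mul_subset_mul_left Set.inter_subset_right).trans mem2)⟩)
  intro x memW
  have : (x, 1) ∈ (fun p : G × G ↦ p.1 * p.2) ⁻¹' W := by simp [memW]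
  rcases isOpen_prod_iff.mp (continuous_mul.isOpen_preimage W <| WClopen.2) x 1 this with
    ⟨U, V, Uopen, Vopen, xmemU, onememV, prodsub⟩
  have h6 : U * V ⊆ W := Set.mul_subset_iff.mpr fun _ hx _ hy ↦ prodsub (Set.mk_mem_prod hx hy)
  exact ⟨U ∩ W, ⟨U, Uopen.mem_nhds xmemU, W, fun _ a ↦ a, rfl⟩,
    V, Vopen.mem_nhds onememV, fun _ a ↦ h6 ((Set.mul_subset_mul_right Set.inter_subset_left) a)⟩

open IsTopologicalGroup in
lemma aux_exists_mulInvClosureNhd {W : Set G} (WClopen : IsClopen W) (Wcomp : IsCompact W) :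
    ∃ T, IsTopologicalGroup.mulInvClosureNhd T W := by
  rcases aux_exist_mul_closure_nhd WClopen Wcomp with ⟨S, Smemnhds, mulclose⟩
  rcases mem_nhds_iff.mp Smemnhds with ⟨U, UsubS, Uopen, onememU⟩
  refine ⟨U ∩ U⁻¹, ?_, ?_, ?_, ?_⟩
  · simp [Uopen.mem_nhds onememU, inv_mem_nhds_one]
  · simp [Set.inter_comm]
  · exact Uopen.inter Uopen.inv
  · exact fun a ha ↦ mulclose
      (Set.mul_subset_mul_left UsubS (Set.mul_subset_mul_left Set.inter_subset_left ha))

/-- A compact clopen neighborhood of `1` contains an open subgroup. -/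
lemma aux_exist_openSubgroup {W : Set G} (WClopen : IsClopen W) (Wcomp : IsCompact W)
    (einW : 1 ∈ W) : ∃ H : Subgroup G, IsOpen (H : Set G) ∧ (H : Set G) ⊆ W := by
  rcases aux_exists_mulInvClosureNhd WClopen Wcomp with ⟨V, hV⟩
  let S : Subgroup G :=
    { carrier := ⋃ n, V ^ (n + 1)
      mul_mem' := fun ha hb ↦ by
        rcases Set.mem_iUnion.mp ha with ⟨k, hk⟩
        rcases Set.mem_iUnion.mp hb with ⟨l, hl⟩
        apply Set.mem_iUnion.mpr
        exact ⟨k + 1 + l, by rw [add_assoc, pow_add]; exact Set.mul_mem_mul hk hl⟩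
      one_mem' := by
        apply Set.mem_iUnion.mpr
        exact ⟨0, by simp [mem_of_mem_nhds hV.nhds]⟩
      inv_mem' := fun ha ↦ by
        rcases Set.mem_iUnion.mp ha with ⟨k, hk⟩
        apply Set.mem_iUnion.mpr
        refine ⟨k, ?_⟩
        rw [← hV.inv]
        simpa only [inv_pow, Set.mem_inv, inv_inv] using hk }
  have hopen : IsOpen (⋃ n, V ^ (n + 1)) := by
    refine isOpen_iUnion fun n ↦ ?_
    rw [pow_succ]
    exact hV.isOpen.mul_left
  refine ⟨S, hopen, ?_⟩
  have mulVpow (n : ℕ) : W * V ^ (n + 1) ⊆ W := by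
    induction' n with n ih
    · simp [hV.mul]
    · rw [pow_succ, ← mul_assoc]
      exact (Set.mul_subset_mul_right ih).trans hV.mul
  have hsub (n : ℕ) : V ^ (n + 1) ⊆ W * V ^ (n + 1) := by
    intro x xin
    rw [Set.mem_mul]
    exact ⟨1, einW, x, xin, one_mul x⟩
  exact Set.iUnion_subset fun i _ a ↦ mulVpow i (hsub i a)

/-- **Van Dantzig's theorem**: a t.d.l.c. group has a compact open subgroup. -/
lemma vanDantzig (G : Type u) [Group G] [TopologicalSpace G] [IsTopologicalGroup G]
    [TotallyDisconnectedSpace G] [LocallyCompactSpace G] :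
    ∃ K : Subgroup G, IsOpen (K : Set G) ∧ IsCompact (K : Set G) := by
  have hone : IsClosed ({1} : Set G) := by
    have hsub : (closure ({1} : Set G)).Subsingleton :=
      (isPreconnected_singleton (x := (1 : G))).closure.subsingleton
    have h1 : (1 : G) ∈ closure ({1} : Set G) := subset_closure rfl
    have : closure ({1} : Set G) = {1} := hsub.eq_singleton_of_mem h1
    rw [← this]; exact isClosed_closure
  have hT2 : T2Space G := IsTopologicalGroup.t2Space_iff_one_closed.mpr hone
  obtain ⟨K0, hK0c, hK0n⟩ := exists_compact_mem_nhds (1 : G)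
  obtain ⟨V, hVclopen, h1V, hVK⟩ :=
    (loc_compact_Haus_tot_disc_of_zero_dim (H := G)).mem_nhds_iff.mp hK0n
  have hVcomp : IsCompact V := hK0c.of_isClosed_subset hVclopen.1 hVK
  obtain ⟨H, hHopen, hHW⟩ := aux_exist_openSubgroup hVclopen hVcomp h1V
  refine ⟨H, hHopen, ?_⟩
  exact hVcomp.of_isClosed_subset (H.isClosed_of_isOpen hHopen) hHW

end VanDantzig

section Averaging

variable {G : Type u} [Group G] [TopologicalSpace G]

/-- Averaging over a compact open "subgroup" `U` (given as a set): an element of `A`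
fixed by `U` can be lifted along an equivariant surjection to an element of `B` fixed
by `U`. -/
lemma averaging_lift [IsTopologicalGroup G] (A B : DiscGMod G) (π : B.carrier →ₗ[ℚ] A.carrier)
    (hπ : DiscGMod.Equivariant π) (hsurj : Function.Surjective π)
    (U : Set G) (hU1 : (1 : G) ∈ U) (hUmul : ∀ u ∈ U, ∀ v ∈ U, u * v ∈ U)
    (hUcomp : IsCompact U)
    (aA : A.carrier) (haA : ∀ u ∈ U, u • aA = aA) :
    ∃ b : B.carrier, π b = aA ∧ ∀ u ∈ U, u • b = b := by
  classical
  obtain ⟨b₀, hb₀⟩ := hsurj aA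
  set c : G → B.carrier := fun g => g • b₀ with hc
  have hfib : ∀ y : B.carrier, IsOpen (c ⁻¹' {y}) := by
    intro y
    rw [isOpen_iff_mem_nhds]
    intro g hg
    have hcont : Continuous fun h : G => g⁻¹ * h := continuous_const.mul continuous_id
    have hst : (fun h : G => g⁻¹ * h) ⁻¹'
        ((MulAction.stabilizer G b₀ : Subgroup G) : Set G) ∈ nhds g := by
      refine ((B.discrete b₀).preimage hcont).mem_nhds ?_
      simp [MulAction.mem_stabilizer_iff]
    filter_upwards [hst] with h hh
    have hh' : (g⁻¹ * h) • b₀ = b₀ := hh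
    have hgy : g • b₀ = y := hg
    show h • b₀ = y
    calc h • b₀ = (g * (g⁻¹ * h)) • b₀ := by rw [mul_inv_cancel_left]
      _ = g • ((g⁻¹ * h) • b₀) := by rw [mul_smul]
      _ = y := by rw [hh', hgy]
  obtain ⟨t, ht⟩ := hUcomp.elim_finite_subcover (fun y : B.carrier => c ⁻¹' {y}) hfib
    (fun g _ => Set.mem_iUnion.mpr ⟨c g, rfl⟩)
  have hSsub : c '' U ⊆ (t : Set B.carrier) := by
    rintro y ⟨g, hg, rfl⟩
    rcases Set.mem_iUnion₂.mp (ht hg) with ⟨y', hy', hgy'⟩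
    rcases hgy' with rfl
    exact hy'
  have hSfin : (c '' U).Finite := t.finite_toSet.subset hSsub
  set s : Finset B.carrier := hSfin.toFinset with hs
  have hmem : ∀ x, x ∈ s ↔ x ∈ c '' U := fun x => hSfin.mem_toFinset
  have hb₀mem : b₀ ∈ s := (hmem b₀).mpr ⟨1, hU1, one_smul G b₀⟩
  have hn0 : s.card ≠ 0 := Finset.card_ne_zero_of_mem hb₀mem
  refine ⟨(s.card : ℚ)⁻¹ • ∑ x ∈ s, x, ?_, ?_⟩
  · have hπx : ∀ x ∈ s, π x = aA := by
      intro x hx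
      rcases (hmem x).mp hx with ⟨u, hu, rfl⟩
      calc π (u • b₀) = u • π b₀ := hπ u b₀
        _ = u • aA := by rw [hb₀]
        _ = aA := haA u hu
    rw [map_smul, map_sum, Finset.sum_congr rfl hπx, Finset.sum_const,
      ← Nat.cast_smul_eq_nsmul ℚ s.card aA, smul_smul,
      inv_mul_cancel₀ (by exact_mod_cast hn0), one_smul]
  · intro u hu
    have hinj : Function.Injective fun x : B.carrier => u • x := MulAction.injective u
    have himg : s.image (fun x => u • x) = s := by
      apply Finset.eq_of_subset_of_card_le
      · intro x hx
        rcases Finset.mem_image.mp hx with ⟨y, hy, rfl⟩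
        rcases (hmem y).mp hy with ⟨v, hv, rfl⟩
        refine (hmem _).mpr ⟨u * v, hUmul u hu v hv, ?_⟩
        show (u * v) • b₀ = u • (v • b₀)
        rw [mul_smul]
      · rw [Finset.card_image_of_injective _ hinj]
    have hsum : ∑ x ∈ s, u • x = ∑ x ∈ s, x := by
      conv_rhs => rw [← himg]
      rw [Finset.sum_image (fun x _ y _ h => hinj h)]
    rw [smul_comm u ((s.card : ℚ)⁻¹), Finset.smul_sum, hsum]

end Averaging

section PermMod

variable (G : Type u) [Group G] [TopologicalSpace G] [IsTopologicalGroup G]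

/-- The permutation module `ℚ[Ω]` of a discrete `G`-set `Ω`, as a discrete
`ℚ[G]`-module. -/
noncomputable def permMod (Ω : Type u) (a : G → Ω → Ω)
    (h1 : ∀ ω, a 1 ω = ω) (hmul : ∀ g h ω, a (g * h) ω = a g (a h ω))
    (hopen : ∀ ω, IsOpen {g : G | a g ω = ω}) : DiscGMod G := by
  letI act : DistribMulAction G (Ω →₀ ℚ) :=
    { smul := fun g f => f.mapDomain (a g)
      one_smul := fun f => by
        show f.mapDomain (a 1) = f
        have : a 1 = id := funext h1
        rw [this, Finsupp.mapDomain_id]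
      mul_smul := fun g h f => by
        show f.mapDomain (a (g * h)) = (f.mapDomain (a h)).mapDomain (a g)
        have : a (g * h) = a g ∘ a h := funext (hmul g h)
        rw [this, Finsupp.mapDomain_comp]
      smul_add := fun g f₁ f₂ => Finsupp.mapDomain_add
      smul_zero := fun g => Finsupp.mapDomain_zero }
  letI cmm : SMulCommClass G ℚ (Ω →₀ ℚ) := ⟨fun g q f => by
    show (q • f).mapDomain (a g) = q • f.mapDomain (a g)
    exact Finsupp.mapDomain_smul q f⟩
  refine ⟨Ω →₀ ℚ, ?_⟩
  intro f
  apply Subgroup.isOpen_of_mem_nhds (g := (1 : G))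
  have hsub : (⋂ ω ∈ (f.support : Set Ω), {g : G | a g ω = ω}) ⊆
      ((MulAction.stabilizer G f : Subgroup G) : Set G) := by
    intro g hg
    have hfix : ∀ ω ∈ f.support, a g ω = ω := by
      intro ω hω
      exact Set.mem_iInter₂.mp hg ω hω
    show g • f = f
    show f.mapDomain (a g) = f
    rw [Finsupp.mapDomain_congr (g := id) hfix, Finsupp.mapDomain_id]
  refine Filter.mem_of_superset ?_ hsub
  refine IsOpen.mem_nhds ?_ ?_
  · exact Set.Finite.isOpen_biInter (f.support.finite_toSet) (fun ω _ => hopen ω)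
  · exact Set.mem_iInter₂.mpr fun ω _ => h1 ω

end PermMod

/-! ### The theorem -/

/-- A discrete `ℚ[G]`-module `M` over a t.d.l.c. group `G` is
projective in the category of discrete `ℚ[G]`-modules if and only if it is a
direct summand of a permutation module `ℚ[Ω]` for some discrete left `G`-set `Ω`
with compact open stabilizers. -/
theorem projective_iff_summand_of_permutation_module (G : Type u) [Group G]
    [TopologicalSpace G] [IsTopologicalGroup G] [TotallyDisconnectedSpace G]
    [LocallyCompactSpace G] (M : DiscGMod G) :
    ProjOverDiscrete G M.carrier (fun g m => g • m) ↔
      ∃ (Ω : Type u) (a : G → Ω → Ω),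
        (∀ ω, a 1 ω = ω) ∧ (∀ g h ω, a (g * h) ω = a g (a h ω)) ∧
        (∀ ω : Ω, IsOpen {g : G | a g ω = ω} ∧ IsCompact {g : G | a g ω = ω}) ∧
        ∃ (i : M.carrier →ₗ[ℚ] (Ω →₀ ℚ)) (p : (Ω →₀ ℚ) →ₗ[ℚ] M.carrier),
          (∀ (g : G) (m : M.carrier), i (g • m) = Finsupp.mapDomain (a g) (i m)) ∧
          (∀ (g : G) (f : Ω →₀ ℚ), p (Finsupp.mapDomain (a g) f) = g • p f) ∧
          p.comp i = LinearMap.id := by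
  constructor
  · -- Forward direction: projective → summand of a permutation module
    intro hProj
    obtain ⟨K, hKopen, hKcomp⟩ := vanDantzig G
    -- the compact open subgroup `U m ≤ Stab(m)` for each `m`
    set U : M.carrier → Subgroup G := fun m => MulAction.stabilizer G m ⊓ K with hU
    have hUopen : ∀ m, IsOpen ((U m : Subgroup G) : Set G) := fun m => by
      rw [hU]; exact (M.discrete m).inter hKopen
    have hUcomp : ∀ m, IsCompact ((U m : Subgroup G) : Set G) := fun m => by
      refine hKcomp.of_isClosed_subset ?_ ?_
      · exact (U m).isClosed_of_isOpen (hUopen m)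
      · rw [hU]; exact Set.inter_subset_right
    have hUstab : ∀ m : M.carrier, ∀ g ∈ U m, g • m = m := fun m g hg => hg.1
    -- the `G`-set Ω
    set Ω : Type u := Σ m : M.carrier, G ⧸ U m with hΩ
    set a : G → Ω → Ω := fun g ω => ⟨ω.1, g • ω.2⟩ with ha
    have ha1 : ∀ ω, a 1 ω = ω := by rintro ⟨m, x⟩; simp [ha]
    have hamul : ∀ g h ω, a (g * h) ω = a g (a h ω) := by
      rintro g h ⟨m, x⟩; simp [ha, mul_smul]
    have hastab : ∀ ω : Ω, {g : G | a g ω = ω} = {g : G | g • ω.2 = ω.2} := by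
      rintro ⟨m, x⟩
      ext g
      simp only [Set.mem_setOf_eq, ha]
      constructor
      · intro h
        exact eq_of_heq (Sigma.mk.inj_iff.mp h).2
      · intro h
        simp only [h]
    have hstabopen : ∀ ω : Ω, IsOpen {g : G | a g ω = ω} ∧
        IsCompact {g : G | a g ω = ω} := by
      rintro ⟨m, x⟩
      obtain ⟨h, rfl⟩ := QuotientGroup.mk_surjective x
      rw [hastab ⟨m, QuotientGroup.mk h⟩]
      have hset : {g : G | g • (QuotientGroup.mk h : G ⧸ U m) = QuotientGroup.mk h} =
          (fun g : G => h⁻¹ * g * h) ⁻¹' ((U m : Subgroup G) : Set G) := by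
        ext g
        simp only [Set.mem_setOf_eq, Set.mem_preimage, SetLike.mem_coe]
        rw [MulAction.Quotient.smul_mk, QuotientGroup.eq]
        constructor
        · intro hmem
          have : (g * h)⁻¹ * h ∈ U m := hmem
          have h2 : ((g * h)⁻¹ * h)⁻¹ ∈ U m := (U m).inv_mem this
          simpa [mul_assoc] using h2
        · intro hmem
          have h2 : (h⁻¹ * g * h)⁻¹ ∈ U m := (U m).inv_mem hmem
          show (g * h)⁻¹ * h ∈ U m
          simpa [mul_assoc] using h2
      constructor
      · rw [hset]
        exact (hUopen m).preimage ((continuous_const.mul continuous_id).mul continuous_const)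
      · have hset2 : (fun g : G => h⁻¹ * g * h) ⁻¹' ((U m : Subgroup G) : Set G) =
            (fun u : G => h * u * h⁻¹) '' ((U m : Subgroup G) : Set G) := by
          ext g
          simp only [Set.mem_preimage, Set.mem_image, SetLike.mem_coe]
          constructor
          · intro hg
            exact ⟨h⁻¹ * g * h, hg, by group⟩
          · rintro ⟨u, hu, rfl⟩
            convert hu using 1
            group
        rw [hset, hset2]
        exact (hUcomp m).image ((continuous_const.mul continuous_id).mul continuous_const)
    -- the map p
    have hwd : ∀ m : M.carrier, ∀ g g' : G,
        @Setoid.r G (QuotientGroup.leftRel (U m)) g g' → g • m = g' • m := by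
      intro m g g' hgg'
      have hmem : g⁻¹ * g' ∈ U m := (QuotientGroup.leftRel_apply).mp hgg'
      have h2 : (g⁻¹ * g') • m = m := hUstab m _ hmem
      have h3 : (g * (g⁻¹ * g')) • m = g • m := by rw [mul_smul, h2]
      rw [mul_inv_cancel_left] at h3
      exact h3.symm
    set pt : Ω → M.carrier := fun ω => Quotient.liftOn' ω.2 (fun g => g • ω.1)
      (fun g g' h => hwd ω.1 g g' h) with hptdef
    have hpt_mk : ∀ (m : M.carrier) (g : G), pt ⟨m, QuotientGroup.mk g⟩ = g • m :=
      fun m g => rfl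
    have hpt_equiv : ∀ (g : G) (ω : Ω), pt (a g ω) = g • pt ω := by
      rintro g ⟨m, x⟩
      obtain ⟨h, rfl⟩ := QuotientGroup.mk_surjective x
      show pt ⟨m, g • (QuotientGroup.mk h : G ⧸ U m)⟩ = g • pt ⟨m, QuotientGroup.mk h⟩
      rw [MulAction.Quotient.smul_mk, hpt_mk, hpt_mk, smul_eq_mul, mul_smul]
    set p : (Ω →₀ ℚ) →ₗ[ℚ] M.carrier := Finsupp.linearCombination ℚ pt with hp
    have hp_single : ∀ (ω : Ω) (c : ℚ), p (Finsupp.single ω c) = c • pt ω :=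
      fun ω c => Finsupp.linearCombination_single ℚ c ω
    have hp_equiv : ∀ (g : G) (f : Ω →₀ ℚ), p (Finsupp.mapDomain (a g) f) = g • p f := by
      intro g
      have : p.comp (Finsupp.lmapDomain ℚ ℚ (a g)) =
          (DistribSMul.toLinearMap ℚ M.carrier g).comp p := by
        apply Finsupp.lhom_ext
        intro ω c
        simp only [LinearMap.comp_apply, Finsupp.lmapDomain_apply,
          Finsupp.mapDomain_single, DistribSMul.toLinearMap_apply]
        rw [hp_single, hp_single, hpt_equiv, smul_comm]
      intro f
      have := LinearMap.congr_fun this f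
      simpa using this
    have hp_surj : Function.Surjective p := by
      intro m
      refine ⟨Finsupp.single ⟨m, QuotientGroup.mk 1⟩ 1, ?_⟩
      rw [hp_single, hpt_mk, one_smul, one_smul]
    -- apply projectivity
    set B : DiscGMod G := permMod G Ω a ha1 hamul (fun ω => (hstabopen ω).1) with hB
    have hBsmul : ∀ (g : G) (f : B.carrier), g • f = Finsupp.mapDomain (a g) f :=
      fun g f => rfl
    have hπequiv : DiscGMod.Equivariant (A := B) (B := M) p := by
      intro g f
      rw [hBsmul]
      exact hp_equiv g f
    obtain ⟨ψ, hψequiv, hψcomp⟩ := hProj M B p hπequiv hp_surj LinearMap.id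
      (fun g x => rfl)
    refine ⟨Ω, a, ha1, hamul, hstabopen, ψ, p, ?_, hp_equiv, ?_⟩
    · intro g m
      have := hψequiv g m
      exact this
    · exact hψcomp
  · -- Backward direction: summand of a permutation module → projective
    rintro ⟨Ω, a, ha1, hamul, hstab, i, p, hi, hp, hpi⟩
    intro A B π hπ hπsurj φ hφ
    -- the setoid of G-orbits on Ω
    have hinv : ∀ (g : G) (ω : Ω), a g⁻¹ (a g ω) = ω := by
      intro g ω
      rw [← hamul, inv_mul_cancel, ha1]
    set st : Setoid Ω := ⟨fun ω ω' => ∃ g, a g ω = ω',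
      ⟨fun ω => ⟨1, ha1 ω⟩,
       fun {ω ω'} ⟨g, hg⟩ => ⟨g⁻¹, by rw [← hg, hinv]⟩,
       fun {ω ω' ω''} ⟨g, hg⟩ ⟨g', hg'⟩ => ⟨g' * g, by rw [hamul, hg, hg']⟩⟩⟩ with hst
    set ρ : Ω → Ω := fun ω => (Quotient.mk st ω).out with hρdef
    have hρ : ∀ ω, ∃ g, a g (ρ ω) = ω := by
      intro ω
      have h := Quotient.exact (s := st) (Quotient.out_eq (Quotient.mk st ω))
      exact h
    have hρeq : ∀ (h : G) (ω : Ω), ρ (a h ω) = ρ ω := by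
      intro h ω
      have : (Quotient.mk st (a h ω)) = Quotient.mk st ω :=
        Quotient.sound (st.symm ⟨h, rfl⟩)
      rw [hρdef]
      simp only [this]
    -- the target values in A
    set Aval : Ω → A.carrier := fun ω => φ (p (Finsupp.single ω 1)) with hAval
    have hAval_equiv : ∀ (g : G) (ω : Ω), Aval (a g ω) = g • Aval ω := by
      intro g ω
      rw [hAval]
      simp only
      rw [← Finsupp.mapDomain_single (f := a g), hp, ← hφ g]
    -- lift the value at each orbit representative, averaged over the stabilizer
    have hav : ∀ ω : Ω, ∃ b : B.carrier, π b = Aval ω ∧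
        ∀ u ∈ {g : G | a g ω = ω}, u • b = b := by
      intro ω
      refine averaging_lift A B π hπ hπsurj {g : G | a g ω = ω} (ha1 ω)
        (fun u hu v hv => by
          show a (u * v) ω = ω
          rw [hamul, hv, hu]) (hstab ω).2 (Aval ω) ?_
      intro u hu
      rw [← hAval_equiv, hu]
    set b0 : Ω → B.carrier := fun ω => (hav ω).choose with hb0
    have hb0π : ∀ ω, π (b0 ω) = Aval ω := fun ω => (hav ω).choose_spec.1
    have hb0fix : ∀ ω, ∀ u ∈ {g : G | a g ω = ω}, u • b0 ω = b0 ω :=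
      fun ω => (hav ω).choose_spec.2
    set bfun : Ω → B.carrier := fun ω => (hρ ω).choose • b0 (ρ ω) with hbfun
    have hπbfun : ∀ ω, π (bfun ω) = Aval ω := by
      intro ω
      rw [hbfun]
      simp only
      rw [hπ, hb0π, ← hAval_equiv, (hρ ω).choose_spec]
    have hbequiv : ∀ (h : G) (ω : Ω), bfun (a h ω) = h • bfun ω := by
      intro h ω
      have hρ' : ρ (a h ω) = ρ ω := hρeq h ω
      set g : G := (hρ ω).choose with hgdef
      set g' : G := (hρ (a h ω)).choose with hg'def
      have hg : a g (ρ ω) = ω := (hρ ω).choose_spec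
      have hg' : a g' (ρ ω) = a h ω := by
        rw [← hρ']
        exact (hρ (a h ω)).choose_spec
      have hu : a (g'⁻¹ * (h * g)) (ρ ω) = ρ ω := by
        rw [hamul, hamul, hg, ← hg', hinv]
      have hfix : (g'⁻¹ * (h * g)) • b0 (ρ ω) = b0 (ρ ω) := hb0fix (ρ ω) _ hu
      show g' • b0 (ρ (a h ω)) = h • (g • b0 (ρ ω))
      rw [hρ']
      calc g' • b0 (ρ ω) = g' • ((g'⁻¹ * (h * g)) • b0 (ρ ω)) := by rw [hfix]
        _ = (g' * (g'⁻¹ * (h * g))) • b0 (ρ ω) := by rw [← mul_smul]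
        _ = (h * g) • b0 (ρ ω) := by rw [mul_inv_cancel_left]
        _ = h • (g • b0 (ρ ω)) := by rw [mul_smul]
    -- assemble the lift
    set ψ0 : (Ω →₀ ℚ) →ₗ[ℚ] B.carrier := Finsupp.linearCombination ℚ bfun with hψ0
    have hψ0_single : ∀ (ω : Ω) (c : ℚ), ψ0 (Finsupp.single ω c) = c • bfun ω :=
      fun ω c => Finsupp.linearCombination_single ℚ c ω
    have hψ0_equiv : ∀ (g : G) (f : Ω →₀ ℚ),
        ψ0 (Finsupp.mapDomain (a g) f) = g • ψ0 f := by
      intro g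
      have : ψ0.comp (Finsupp.lmapDomain ℚ ℚ (a g)) =
          (DistribSMul.toLinearMap ℚ B.carrier g).comp ψ0 := by
        apply Finsupp.lhom_ext
        intro ω c
        simp only [LinearMap.comp_apply, Finsupp.lmapDomain_apply,
          Finsupp.mapDomain_single, DistribSMul.toLinearMap_apply]
        rw [hψ0_single, hψ0_single, hbequiv, smul_comm]
      intro f
      have := LinearMap.congr_fun this f
      simpa using this
    have hπψ0 : π.comp ψ0 = φ.comp p := by
      apply Finsupp.lhom_ext
      intro ω c
      simp only [LinearMap.comp_apply]
      rw [hψ0_single, map_smul, hπbfun]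
      rw [hAval]
      simp only
      rw [← map_smul, ← map_smul, Finsupp.smul_single_one]
    refine ⟨ψ0.comp i, ?_, ?_⟩
    · intro g x
      simp only [LinearMap.comp_apply]
      rw [hi, hψ0_equiv]
    · ext m
      simp only [LinearMap.comp_apply]
      have h1 : π (ψ0 (i m)) = φ (p (i m)) := LinearMap.congr_fun hπψ0 (i m)
      have h2 : p (i m) = m := LinearMap.congr_fun hpi m
      rw [h1, h2]
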